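/- Let G be an n̄×y matrix over a finite field 𝔽_q and let Q be an n̄×(fx) matrix over 𝔽_q written in blocks Q = (Q_1,…,Q_f) with each Q_j of size n̄×x, and fix k ∈ {1,…,f}. Then the coset Q·m⃗ + Im(G) in the quotient 𝔽_q^{n̄}/Im(G) depends only on the k-th block of m⃗ — i.e., Q·m⃗ + Im(G) = Q·m⃗' + Im(G) for all m⃗ = (m_1,…,m_f), m⃗' = (m'_1,…,m'_f) ∈ (𝔽_q^x)^f with m_k = m'_k — if and only if for every j ≠ k every column of Q_j lies in the column span of G. (This is the characterization of server secrecy for a linear CSPIR protocol with G and query value Q of index k.) -/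
import Mathlib


open Matrix

/-- The column span of a matrix, as a submodule of the space of column vectors. -/
def colSpan {K : Type*} [Field K] {ι ν : Type*} (M : Matrix ι ν K) : Submodule K (ι → K) :=
  Submodule.span K (Set.range fun j : ν => fun i : ι => M i j)

lemma mulVec_eq_sum_cols {K : Type*} [Field K] {nb : ℕ} {ν : Type*} [Fintype ν]
    (Q : Matrix (Fin nb) ν K) (v : ν → K) :
    Q.mulVec v = ∑ p : ν, v p • (fun i => Q i p) := by
  funext row
  simp [Matrix.mulVec, dotProduct, Finset.sum_apply, mul_comm]

/-- for an `n̄×y` matrix `G` and an `n̄×(fx)` matrix `Q` with blocks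
`Q_1, …, Q_f` (block `Q_j` consists of the columns `(j, ·)`), and a fixed `k`,
the coset `Q·m⃗ + Im G` depends only on the `k`-th block of `m⃗` iff for every
`j ≠ k` every column of `Q_j` lies in the column span of `G` (the characterization
of server secrecy for a linear CSPIR protocol). -/
theorem stmt8 {K : Type*} [Field K] [Fintype K] {nb y f x : ℕ}
    (G : Matrix (Fin nb) (Fin y) K) (Q : Matrix (Fin nb) (Fin f × Fin x) K) (k : Fin f) :
    (∀ m m' : Fin f → Fin x → K, m k = m' k →
        (colSpan G).mkQ (Q.mulVec fun p => m p.1 p.2)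
          = (colSpan G).mkQ (Q.mulVec fun p => m' p.1 p.2))
      ↔
    (∀ j : Fin f, j ≠ k → ∀ i : Fin x,
        (fun row : Fin nb => Q row (j, i)) ∈ colSpan G) := by
  constructor
  · intro h j hj i
    have hm : ((fun p q => if p = j ∧ q = i then (1:K) else 0) : Fin f → Fin x → K) k
        = (fun _ _ => (0:K)) k := by
      funext q
      simp [hj.symm]
    have h2 := h (fun p q => if p = j ∧ q = i then (1:K) else 0) (fun _ _ => (0:K)) hm
    have hv : (Q.mulVec fun p : Fin f × Fin x =>
        if p.1 = j ∧ p.2 = i then (1:K) else 0) = fun row => Q row (j, i) := by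
      funext row
      have : ∀ p : Fin f × Fin x, (p.1 = j ∧ p.2 = i) ↔ p = (j, i) := by
        intro p; constructor
        · rintro ⟨h1, h2⟩; exact Prod.ext h1 h2
        · rintro rfl; exact ⟨rfl, rfl⟩
      simp only [Matrix.mulVec, dotProduct, this, mul_ite, mul_one, mul_zero]
      simp
    rw [hv] at h2
    have h0 : (Q.mulVec fun p : Fin f × Fin x => (0:K)) = 0 := by
      funext row; simp [Matrix.mulVec, dotProduct]
    rw [h0, map_zero] at h2
    rw [Submodule.mkQ_apply, Submodule.Quotient.mk_eq_zero] at h2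
    exact h2
  · intro h m m' hk
    rw [Submodule.mkQ_apply, Submodule.mkQ_apply, Submodule.Quotient.eq]
    have : (Q.mulVec fun p => m p.1 p.2) - (Q.mulVec fun p => m' p.1 p.2)
        = Q.mulVec fun p => m p.1 p.2 - m' p.1 p.2 := by
      rw [← Matrix.mulVec_sub]; rfl
    rw [this, mulVec_eq_sum_cols]
    refine Submodule.sum_mem _ ?_
    rintro ⟨p1, p2⟩ -
    by_cases hp : p1 = k
    · subst hp
      have : m p1 p2 - m' p1 p2 = 0 := by rw [hk]; ring
      rw [this, zero_smul]
      exact Submodule.zero_mem _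
    · exact Submodule.smul_mem _ _ (h p1 hp p2)
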